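/- Fix η ∈ (0,1) and ε ∈ (0,1). Then there exist a constant θ ∈ ℝ and N₀ ∈ ℕ such that for every n ≥ N₀ there exist an integer M ≥ 1, real numbers q₁,…,q_M ∈ [0,1], and a decoder g : {0,e,1}^n → {1,…,M} with average error probability (1/M)·∑_{m=1}^M ℙ_{Y ∼ P_m^{⊗n}}[ g(Y) ≠ m ] ≤ ε and log₂ M ≥ log₂( ⌈ (1−η)·√n / (−Φ⁻¹(ε/2)) ⌉ ) + θ, where P_m is the distribution on {0,e,1} with P_m(0) = q_m(1−η), P_m(e) = η, P_m(1) = (1−q_m)(1−η). -/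

import Mathlib

/-- Probability of the event `E ⊆ (Fin k)^n` under the `n`-fold product measure whose
coordinates are i.i.d. with common distribution `P` on `Fin k`. -/
noncomputable def prodProb {k : ℕ} (P : Fin k → ℝ) (n : ℕ) (E : Set (Fin n → Fin k)) : ℝ :=
  ∑ y : Fin n → Fin k, E.indicator (fun y => ∏ i, P (y i)) y

/-- The cumulative distribution function of the standard normal distribution. -/
noncomputable def stdNormalCDF (x : ℝ) : ℝ :=
  ∫ t in Set.Iic x, (Real.sqrt (2 * Real.pi))⁻¹ * Real.exp (-t ^ 2 / 2)

/-- The inverse of the standard normal CDF. -/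
noncomputable def stdNormalCDFInv : ℝ → ℝ :=
  Function.invFun stdNormalCDF

lemma sum_prod_pi {n : ℕ} (h : Fin n → Fin 3 → ℝ) :
    ∑ y : Fin n → Fin 3, ∏ i, h i (y i) = ∏ i, ∑ x, h i x := by
  rw [Finset.prod_univ_sum]
  rw [Fintype.piFinset_univ]

lemma variance_bound {n : ℕ} (P : Fin 3 → ℝ)
    (hsum : P 0 + P 1 + P 2 = 1) :
    ∑ y : Fin n → Fin 3, (∏ i, P (y i)) *
        (∑ i, ((if y i = 0 then (1:ℝ) else 0) - P 0)) ^ 2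
      = n * (P 0 * (1 - P 0)) := by
  set p := P 0 with hp
  have key : ∀ i j : Fin n,
      (∑ y : Fin n → Fin 3, (∏ k, P (y k)) *
        (((if y i = 0 then (1:ℝ) else 0) - p) * ((if y j = 0 then (1:ℝ) else 0) - p)))
      = if i = j then p * (1 - p) else 0 := by
    intro i j
    have hrw : ∀ y : Fin n → Fin 3,
        (∏ k, P (y k)) *
          (((if y i = 0 then (1:ℝ) else 0) - p) * ((if y j = 0 then (1:ℝ) else 0) - p))
        = ∏ k, (P (y k) * ((if k = i then (if y k = 0 then (1:ℝ) else 0) - p else 1)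
            * (if k = j then (if y k = 0 then (1:ℝ) else 0) - p else 1))) := by
      intro y
      rw [Finset.prod_mul_distrib, Finset.prod_mul_distrib,
        Finset.prod_ite_eq' Finset.univ i (fun k => (if y k = 0 then (1:ℝ) else 0) - p),
        Finset.prod_ite_eq' Finset.univ j (fun k => (if y k = 0 then (1:ℝ) else 0) - p)]
      simp [mul_assoc]
    rw [Finset.sum_congr rfl (fun y _ => hrw y),
      sum_prod_pi (fun k x => P x * ((if k = i then (if x = 0 then (1:ℝ) else 0) - p else 1)
        * (if k = j then (if x = 0 then (1:ℝ) else 0) - p else 1)))]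
    by_cases hij : i = j
    · subst hij
      rw [if_pos rfl]
      have hfac : ∀ k : Fin n,
          (∑ x : Fin 3, P x * ((if k = i then (if x = 0 then (1:ℝ) else 0) - p else 1)
            * (if k = i then (if x = 0 then (1:ℝ) else 0) - p else 1)))
          = if k = i then p * (1 - p) else 1 := by
        intro k
        by_cases hk : k = i
        · simp only [hk, if_pos rfl, Fin.sum_univ_three,
            if_neg (show (1:Fin 3) ≠ 0 by decide), if_neg (show (2:Fin 3) ≠ 0 by decide),
            if_pos rfl, if_true]
          linear_combination (p:ℝ)^2 * hsum
        · simp only [if_neg hk, Fin.sum_univ_three]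
          norm_num
          linarith
      rw [Finset.prod_congr rfl (fun k _ => hfac k), Finset.prod_ite_eq' Finset.univ i
        (fun _ => p * (1 - p))]
      simp
    · rw [if_neg hij]
      apply Finset.prod_eq_zero (Finset.mem_univ i)
      simp only [if_pos rfl, if_neg hij, mul_one, Fin.sum_univ_three,
        if_neg (show (1:Fin 3) ≠ 0 by decide), if_neg (show (2:Fin 3) ≠ 0 by decide), if_true]
      linear_combination (-p) * hsum
  calc ∑ y : Fin n → Fin 3, (∏ i, P (y i)) *
        (∑ i, ((if y i = 0 then (1:ℝ) else 0) - p)) ^ 2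
      = ∑ i : Fin n, ∑ j : Fin n, ∑ y : Fin n → Fin 3, (∏ k, P (y k)) *
          (((if y i = 0 then (1:ℝ) else 0) - p) * ((if y j = 0 then (1:ℝ) else 0) - p)) := by
        have hy : ∀ y : Fin n → Fin 3, (∏ k, P (y k)) *
            (∑ i, ((if y i = 0 then (1:ℝ) else 0) - p)) ^ 2
            = ∑ i : Fin n, ∑ j : Fin n, (∏ k, P (y k)) *
              (((if y i = 0 then (1:ℝ) else 0) - p) * ((if y j = 0 then (1:ℝ) else 0) - p)) := by
          intro y
          rw [sq, Finset.sum_mul_sum, Finset.mul_sum]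
          exact Finset.sum_congr rfl fun i _ => by rw [Finset.mul_sum]
        rw [Finset.sum_congr rfl fun y _ => hy y, Finset.sum_comm]
        exact Finset.sum_congr rfl fun i _ => Finset.sum_comm
    _ = ∑ i : Fin n, ∑ j : Fin n, (if i = j then p * (1 - p) else 0) := by
        exact Finset.sum_congr rfl fun i _ => Finset.sum_congr rfl fun j _ => key i j
    _ = n * (p * (1 - p)) := by
        simp [Finset.sum_ite_eq, Finset.card_univ]

lemma chebyshev {n : ℕ} (P : Fin 3 → ℝ) (hP : ∀ x, 0 ≤ P x) (μ t : ℝ) (ht : 0 < t)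
    (E : Set (Fin n → Fin 3))
    (hE : ∀ y ∈ E, t ≤ |(∑ i, (if y i = 0 then (1:ℝ) else 0)) - μ|) :
    prodProb P n E ≤ (∑ y : Fin n → Fin 3, (∏ i, P (y i)) *
      ((∑ i, (if y i = 0 then (1:ℝ) else 0)) - μ) ^ 2) / t ^ 2 := by
  rw [prodProb, Finset.sum_div]
  apply Finset.sum_le_sum
  intro y _
  have hPy : 0 ≤ ∏ i, P (y i) := Finset.prod_nonneg fun i _ => hP _
  by_cases hy : y ∈ E
  · rw [Set.indicator_of_mem hy]
    have h1 : t ^ 2 ≤ ((∑ i, (if y i = 0 then (1:ℝ) else 0)) - μ) ^ 2 := by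
      have := hE y hy
      calc t ^ 2 ≤ |(∑ i, (if y i = 0 then (1:ℝ) else 0)) - μ| ^ 2 := by
            apply pow_le_pow_left₀ ht.le this
        _ = _ := sq_abs _
    rw [le_div_iff₀ (by positivity)]
    calc (∏ i, P (y i)) * t ^ 2
        ≤ (∏ i, P (y i)) * (((∑ i, (if y i = 0 then (1:ℝ) else 0)) - μ) ^ 2) :=
          mul_le_mul_of_nonneg_left h1 hPy
      _ = _ := rfl
  · rw [Set.indicator_of_notMem hy]
    positivity

theorem gaussian_approximation_bec (η : ℝ) (hη0 : 0 < η) (hη1 : η < 1)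
    (ε : ℝ) (hε0 : 0 < ε) (hε1 : ε < 1) :
    ∃ θ : ℝ, ∃ N₀ : ℕ, ∀ n : ℕ, N₀ ≤ n →
      ∃ M : ℕ, 1 ≤ M ∧ ∃ q : Fin M → ℝ,
        (∀ m, 0 ≤ q m ∧ q m ≤ 1) ∧
        ∃ g : (Fin n → Fin 3) → Fin M,
          (1 / (M : ℝ)) * ∑ m : Fin M,
              prodProb ![q m * (1 - η), η, (1 - q m) * (1 - η)] n {y | g y ≠ m} ≤ ε ∧
          Real.logb 2 (⌈(1 - η) * Real.sqrt n / (-stdNormalCDFInv (ε / 2))⌉₊ : ℝ) + θ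
            ≤ Real.logb 2 M := by
  set c : ℝ := 1 - η with hc
  have hc0 : 0 < c := by simp only [hc]; linarith
  set a : ℝ := -stdNormalCDFInv (ε / 2) with ha
  set sε : ℝ := Real.sqrt ε with hsε
  have hsε0 : 0 < sε := Real.sqrt_pos.2 hε0
  refine ⟨min 0 (Real.logb 2 (c * sε) - Real.logb 2 (c / a + 1)), 1, ?_⟩
  intro n hn
  have hn0 : (0:ℝ) < n := by exact_mod_cast hn
  have hsn : (1:ℝ) ≤ Real.sqrt n := by
    rw [show (1:ℝ) = Real.sqrt 1 by simp]
    exact Real.sqrt_le_sqrt (by exact_mod_cast hn)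
  set sn : ℝ := Real.sqrt n with hsnn
  have hsn0 : 0 < sn := lt_of_lt_of_le one_pos hsn
  set d : ℝ := sn / sε with hd
  have hd0 : 0 < d := div_pos hsn0 hsε0
  set M : ℕ := ⌊c * sn * sε⌋₊ + 1 with hM
  have hM1 : 1 ≤ M := Nat.le_add_left 1 _
  have hMpos : (0:ℝ) < M := by exact_mod_cast hM1
  refine ⟨M, hM1, fun m => (m : ℝ) * d / (n * c), ?_, ?_⟩
  · -- q bounds
    intro m
    constructor
    · positivity
    · rw [div_le_one (by positivity)]
      have hm : (m : ℝ) ≤ c * sn * sε := by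
        have h1 : (m : ℕ) ≤ ⌊c * sn * sε⌋₊ := by omega
        calc (m : ℝ) ≤ (⌊c * sn * sε⌋₊ : ℝ) := by exact_mod_cast h1
          _ ≤ c * sn * sε := Nat.floor_le (by positivity)
      have hsq : sn * sn = (n : ℝ) := Real.mul_self_sqrt hn0.le
      calc (m : ℝ) * d ≤ (c * sn * sε) * d := by
            apply mul_le_mul_of_nonneg_right hm hd0.le
        _ = c * (sn * sn) := by rw [hd, mul_div_assoc', div_eq_iff hsε0.ne']; ring
        _ = n * c := by rw [hsq]; ring
  · -- decoder
    have hMlt : ∀ z : ℕ, min z (M - 1) < M := fun z => by omega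
    refine ⟨fun y => ⟨min (round ((∑ i, if y i = 0 then (1:ℝ) else 0) / d)).toNat (M - 1),
      hMlt _⟩, ?_, ?_⟩
    · -- average error
      set q : Fin M → ℝ := fun m => (m : ℝ) * d / (n * c) with hq
      have herr : ∀ m : Fin M,
          prodProb ![q m * c, η, (1 - q m) * c] n
            {y | (⟨min (round ((∑ i, if y i = 0 then (1:ℝ) else 0) / d)).toNat (M - 1),
              hMlt _⟩ : Fin M) ≠ m} ≤ ε := by
        intro m
        set P : Fin 3 → ℝ := ![q m * c, η, (1 - q m) * c] with hP
        have hP0 : P 0 = q m * c := rfl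
        have hP1 : P 1 = η := rfl
        have hP2 : P 2 = (1 - q m) * c := rfl
        have hPnn : ∀ x, 0 ≤ P x := by
          intro x
          fin_cases x
          · show 0 ≤ q m * c
            have : 0 ≤ q m := by positivity
            positivity
          · exact hη0.le
          · show 0 ≤ (1 - q m) * c
            have hq1 : q m ≤ 1 := by
              rw [hq, div_le_one (by positivity)]
              have hm : (m : ℝ) ≤ c * sn * sε := by
                have h1 : (m : ℕ) ≤ ⌊c * sn * sε⌋₊ := by omega
                calc (m : ℝ) ≤ (⌊c * sn * sε⌋₊ : ℝ) := by exact_mod_cast h1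
                  _ ≤ c * sn * sε := Nat.floor_le (by positivity)
              have hsq : sn * sn = (n : ℝ) := Real.mul_self_sqrt hn0.le
              calc (m : ℝ) * d ≤ (c * sn * sε) * d := by
                    apply mul_le_mul_of_nonneg_right hm hd0.le
                _ = c * (sn * sn) := by rw [hd, mul_div_assoc', div_eq_iff hsε0.ne']; ring
                _ = n * c := by rw [hsq]; ring
            have : 0 ≤ 1 - q m := by linarith
            positivity
        have hPsum : P 0 + P 1 + P 2 = 1 := by
          rw [hP0, hP1, hP2, hc]; ring
        have hmu : (n : ℝ) * P 0 = (m : ℝ) * d := by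
          rw [hP0, hq]
          field_simp
        -- subset of large deviation event
        have hsub : ∀ y : Fin n → Fin 3,
            (⟨min (round ((∑ i, if y i = 0 then (1:ℝ) else 0) / d)).toNat (M - 1),
              hMlt _⟩ : Fin M) ≠ m →
            d / 2 ≤ |(∑ i, (if y i = 0 then (1:ℝ) else 0)) - (m : ℝ) * d| := by
          intro y hy
          by_contra hlt
          push_neg at hlt
          apply hy
          set S : ℝ := ∑ i, (if y i = 0 then (1:ℝ) else 0) with hS
          have hr : |S / d - (m : ℝ)| < 1/2 := by
            have : S / d - (m : ℝ) = (S - (m : ℝ) * d) / d := by field_simp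
            rw [this, abs_div, abs_of_pos hd0, div_lt_iff₀ hd0]
            linarith
          have hround : round (S / d) = (m : ℤ) := by
            rw [round_eq]
            rw [Int.floor_eq_iff]
            rw [abs_sub_lt_iff] at hr
            constructor
            · push_cast; linarith [hr.2]
            · push_cast; linarith [hr.1]
          apply Fin.ext
          show min (round (S / d)).toNat (M - 1) = (m : ℕ)
          rw [hround, Int.toNat_natCast]
          have : (m : ℕ) ≤ M - 1 := by omega
          omega
        -- chebyshev
        have hvar : ∑ y : Fin n → Fin 3, (∏ i, P (y i)) *
            ((∑ i, (if y i = 0 then (1:ℝ) else 0)) - (m : ℝ) * d) ^ 2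
            = n * (P 0 * (1 - P 0)) := by
          rw [← variance_bound P hPsum]
          apply Finset.sum_congr rfl
          intro y _
          congr 2
          rw [Finset.sum_sub_distrib, Finset.sum_const, Finset.card_univ]
          simp only [Fintype.card_fin, nsmul_eq_mul]
          rw [hmu]
        have hcheb := chebyshev P hPnn ((m : ℝ) * d) (d/2) (by linarith) _ hsub
        rw [hvar] at hcheb
        have hfinal : (n : ℝ) * (P 0 * (1 - P 0)) / (d/2)^2 ≤ ε := by
          have hPle : P 0 * (1 - P 0) ≤ 1/4 := by nlinarith [sq_nonneg (1/2 - P 0)]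
          have hdsq : d ^ 2 = n / ε := by
            rw [hd, div_pow, Real.sq_sqrt hn0.le, Real.sq_sqrt hε0.le]
          have h1 : (n : ℝ) * (P 0 * (1 - P 0)) / (d/2)^2 ≤ (n : ℝ) * (1/4) / (d/2)^2 := by
            apply div_le_div_of_nonneg_right ?_ (by positivity)
            · exact mul_le_mul_of_nonneg_left hPle hn0.le
          have h2 : (n : ℝ) * (1/4) / (d/2)^2 = ε := by
            rw [div_pow, hdsq]
            field_simp
            ring
          linarith
        exact le_trans hcheb hfinal
      have hsum_le : ∑ m : Fin M,
          prodProb ![q m * c, η, (1 - q m) * c] n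
            {y | (⟨min (round ((∑ i, if y i = 0 then (1:ℝ) else 0) / d)).toNat (M - 1),
              hMlt _⟩ : Fin M) ≠ m} ≤ M * ε := by
        calc _ ≤ ∑ _m : Fin M, ε := Finset.sum_le_sum fun m _ => herr m
          _ = M * ε := by simp [Finset.sum_const, Finset.card_univ]
      calc (1 / (M:ℝ)) * ∑ m : Fin M,
          prodProb ![q m * c, η, (1 - q m) * c] n
            {y | (⟨min (round ((∑ i, if y i = 0 then (1:ℝ) else 0) / d)).toNat (M - 1),
              hMlt _⟩ : Fin M) ≠ m}
          ≤ (1 / (M:ℝ)) * (M * ε) := by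
            apply mul_le_mul_of_nonneg_left hsum_le (by positivity)
        _ = ε := by field_simp
    · -- log bound
      by_cases hA : 0 < a
      · have hA0 : 0 < c * sn / a := div_pos (mul_pos hc0 hsn0) hA
        have hceilpos : 0 < ⌈c * sn / a⌉₊ := Nat.ceil_pos.2 hA0
        have h1 : (⌈c * sn / a⌉₊ : ℝ) ≤ (c/a + 1) * sn := by
          have hlt : (⌈c * sn / a⌉₊ : ℝ) < c * sn / a + 1 := Nat.ceil_lt_add_one hA0.le
          have heq : c * sn / a = (c/a) * sn := by ring
          nlinarith [hsn]
        have hca : (0:ℝ) < c/a + 1 := by positivity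
        have l1 : Real.logb 2 (⌈c * sn / a⌉₊ : ℝ) ≤ Real.logb 2 ((c/a + 1) * sn) := by
          exact Real.logb_le_logb_of_le one_lt_two (by exact_mod_cast hceilpos) h1
        have e1 : Real.logb 2 ((c/a + 1) * sn) = Real.logb 2 (c/a + 1) + Real.logb 2 sn :=
          Real.logb_mul (ne_of_gt hca) (ne_of_gt hsn0)
        have hMge : c * sε * sn ≤ (M : ℝ) := by
          have := Nat.lt_floor_add_one (c * sn * sε)
          rw [hM]
          push_cast
          nlinarith
        have l2 : Real.logb 2 (c * sε * sn) ≤ Real.logb 2 (M : ℝ) :=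
          Real.logb_le_logb_of_le one_lt_two (by positivity) hMge
        have e2 : Real.logb 2 (c * sε * sn) = Real.logb 2 (c * sε) + Real.logb 2 sn :=
          Real.logb_mul (by positivity) (ne_of_gt hsn0)
        have hθ : min 0 (Real.logb 2 (c * sε) - Real.logb 2 (c / a + 1))
            ≤ Real.logb 2 (c * sε) - Real.logb 2 (c / a + 1) := min_le_right _ _
        linarith
      · push_neg at hA
        have hAle : c * sn / a ≤ 0 := by
          rcases lt_or_eq_of_le hA with h | h
          · exact le_of_lt (div_neg_of_pos_of_neg (mul_pos hc0 hsn0) h)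
          · rw [h, div_zero]
        have hceil : ⌈c * sn / a⌉₊ = 0 := Nat.ceil_eq_zero.2 hAle
        rw [hceil, Nat.cast_zero, Real.logb_zero, zero_add]
        have hlogM : 0 ≤ Real.logb 2 (M : ℝ) :=
          Real.logb_nonneg one_lt_two (by exact_mod_cast hM1)
        have := min_le_left (0:ℝ) (Real.logb 2 (c * sε) - Real.logb 2 (c / a + 1))
        linarith
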